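/- Every prime ideal of a TRO V is primal. Here P is prime if for all closed ideals I, J, K of V, IJK ⊆ P implies I ⊆ P or J ⊆ P or K ⊆ P. -/
import Mathlib


/-!
Statement 0: In a TRO `V ⊆ B(H,K)`, the closed linear span of products
`I₁ I₂* I₃ ⋯ I_{2n+1}` of closed ideals equals their intersection.
-/

open ContinuousLinearMap

variable {H K : Type*} [NormedAddCommGroup H] [InnerProductSpace ℂ H] [CompleteSpace H]
  [NormedAddCommGroup K] [InnerProductSpace ℂ K] [CompleteSpace K]

/-- The ternary product `x y* z` of operators in `B(H, K)`. -/
noncomputable def tp (x y z : H →L[ℂ] K) : H →L[ℂ] K :=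
  (x.comp (ContinuousLinearMap.adjoint y)).comp z

/-- A TRO: a norm-closed subspace of `B(H,K)` closed under the ternary product. -/
def IsTRO (V : Submodule ℂ (H →L[ℂ] K)) : Prop :=
  IsClosed (V : Set (H →L[ℂ] K)) ∧ ∀ x ∈ V, ∀ y ∈ V, ∀ z ∈ V, tp x y z ∈ V

/-- A closed ideal of the TRO `V`: a closed subspace `I ⊆ V` with
`I V* V + V V* I ⊆ I`. -/
def IsTROIdeal (V I : Submodule ℂ (H →L[ℂ] K)) : Prop :=
  I ≤ V ∧ IsClosed (I : Set (H →L[ℂ] K)) ∧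
    (∀ a ∈ I, ∀ y ∈ V, ∀ z ∈ V, tp a y z ∈ I) ∧
    (∀ x ∈ V, ∀ y ∈ V, ∀ a ∈ I, tp x y a ∈ I)

/-- The alternating product `a₀ a₁* a₂ a₃* ⋯ a_{2n}` of `2n+1` operators. -/
noncomputable def altProd : (n : ℕ) → (Fin (2 * n + 1) → (H →L[ℂ] K)) → (H →L[ℂ] K)
  | 0, a => a 0
  | n + 1, a =>
      tp (altProd n fun i => a ⟨i.1, by have := i.isLt; omega⟩)
        (a ⟨2 * n + 1, by omega⟩) (a ⟨2 * n + 2, by omega⟩)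

/-- The product of an odd family of ideals: the closed linear span of the
alternating products `a₁ a₂* a₃ ⋯ a_{2n+1}` with `a_k ∈ I_k`. -/
noncomputable def oddProdIdeal (n : ℕ) (J : Fin (2 * n + 1) → Submodule ℂ (H →L[ℂ] K)) :
    Submodule ℂ (H →L[ℂ] K) :=
  (Submodule.span ℂ
      {x | ∃ a : Fin (2 * n + 1) → (H →L[ℂ] K),
        (∀ i, a i ∈ J i) ∧ x = altProd n a}).topologicalClosure

/-- A closed ideal `P` of the TRO `V` is primal if whenever closed ideals
`J₁, …, J_{2n+1}` of `V` have zero product, some `J_k ⊆ P`. -/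
def IsTROPrimal (V P : Submodule ℂ (H →L[ℂ] K)) : Prop :=
  IsTROIdeal V P ∧ ∀ (n : ℕ) (J : Fin (2 * n + 1) → Submodule ℂ (H →L[ℂ] K)),
    (∀ i, IsTROIdeal V (J i)) → oddProdIdeal n J = ⊥ → ∃ i, J i ≤ P

/-- The triple product of ideals `I J L`: the closed linear span of
`{a b* c : a ∈ I, b ∈ J, c ∈ L}`. -/
noncomputable def tripleProdIdeal (I J L : Submodule ℂ (H →L[ℂ] K)) :
    Submodule ℂ (H →L[ℂ] K) :=
  (Submodule.span ℂ
      {x | ∃ a ∈ I, ∃ b ∈ J, ∃ c ∈ L, x = tp a b c}).topologicalClosure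

/-- A closed ideal `P` of the TRO `V` is prime if `IJL ⊆ P` implies
`I ⊆ P`, `J ⊆ P` or `L ⊆ P` for all closed ideals `I, J, L` of `V`. -/
def IsTROPrime (V P : Submodule ℂ (H →L[ℂ] K)) : Prop :=
  IsTROIdeal V P ∧ ∀ I J L : Submodule ℂ (H →L[ℂ] K),
    IsTROIdeal V I → IsTROIdeal V J → IsTROIdeal V L →
    tripleProdIdeal I J L ≤ P → I ≤ P ∨ J ≤ P ∨ L ≤ P


/-! ### Auxiliary lemmas -/

/-- The ternary product as a continuous linear map in the first slot. -/
noncomputable def tpl (y z : H →L[ℂ] K) : (H →L[ℂ] K) →L[ℂ] (H →L[ℂ] K) :=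
  ((compL ℂ H K K).flip z).comp ((compL ℂ K H K).flip (ContinuousLinearMap.adjoint y))

@[simp] lemma tpl_apply (x y z : H →L[ℂ] K) : tpl y z x = tp x y z := rfl

/-- The ternary product as a continuous linear map in the third slot. -/
noncomputable def tpr (x y : H →L[ℂ] K) : (H →L[ℂ] K) →L[ℂ] (H →L[ℂ] K) :=
  compL ℂ H K K (x.comp (ContinuousLinearMap.adjoint y))

@[simp] lemma tpr_apply (x y z : H →L[ℂ] K) : tpr x y z = tp x y z := rfl

lemma tp_assoc (u v w y z : H →L[ℂ] K) :
    tp (tp u v w) y z = tp u v (tp w y z) := by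
  simp only [tp, ContinuousLinearMap.comp_assoc]

/-- Pushing a continuous linear map through the closed linear span. -/
lemma mem_of_clm {S : Set (H →L[ℂ] K)} {T : Submodule ℂ (H →L[ℂ] K)}
    (hT : IsClosed (T : Set (H →L[ℂ] K))) (f : (H →L[ℂ] K) →L[ℂ] (H →L[ℂ] K))
    (hS : ∀ s ∈ S, f s ∈ T) {a : H →L[ℂ] K}
    (ha : a ∈ (Submodule.span ℂ S).topologicalClosure) : f a ∈ T := by
  have hcl : IsClosed ((T.comap (f : (H →L[ℂ] K) →ₗ[ℂ] (H →L[ℂ] K)) : Set (H →L[ℂ] K))) :=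
    hT.preimage f.continuous
  have hle : (Submodule.span ℂ S).topologicalClosure ≤
      T.comap (f : (H →L[ℂ] K) →ₗ[ℂ] (H →L[ℂ] K)) :=
    Submodule.topologicalClosure_minimal _ (Submodule.span_le.2 hS) hcl
  exact hle ha

lemma altProd_mem_of (n : ℕ) {W : Submodule ℂ (H →L[ℂ] K)}
    (hW : ∀ x ∈ W, ∀ y ∈ W, ∀ z ∈ W, tp x y z ∈ W)
    (a : Fin (2 * n + 1) → (H →L[ℂ] K)) (h : ∀ i, a i ∈ W) :
    altProd n a ∈ W := by
  induction n with
  | zero => exact h 0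
  | succ n ih =>
      simp only [altProd]
      exact hW _ (ih _ fun i => h _) _ (h _) _ (h _)

lemma tp_altProd (n : ℕ) (a : Fin (2 * n + 1) → (H →L[ℂ] K)) (x y : H →L[ℂ] K) :
    tp x y (altProd n a) = altProd n (fun i => if i.1 = 0 then tp x y (a i) else a i) := by
  induction n with
  | zero => simp [altProd]
  | succ n ih =>
      simp only [altProd]
      rw [← tp_assoc, ih]
      congr 1

lemma altProd_tp (n : ℕ) (a : Fin (2 * n + 1) → (H →L[ℂ] K)) (y z : H →L[ℂ] K) :
    tp (altProd n a) y z = altProd n (fun i => if i.1 = 2 * n then tp (a i) y z else a i) := by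
  cases n with
  | zero => simp [altProd]
  | succ n =>
      simp only [altProd]
      rw [tp_assoc]
      congr 1
      · congr 1
        funext i
        have : i.1 ≠ 2 * (n + 1) := by omega
        simp [this]
      · have : (2 * n + 1 : ℕ) ≠ 2 * (n + 1) := by omega
        simp [this]
      · simp [show (2 * n + 2 : ℕ) = 2 * (n + 1) by omega]

lemma oddProdIdeal_isIdeal (V : Submodule ℂ (H →L[ℂ] K)) (hV : IsTRO V) (n : ℕ)
    (J : Fin (2 * n + 1) → Submodule ℂ (H →L[ℂ] K)) (hJ : ∀ i, IsTROIdeal V (J i)) :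
    IsTROIdeal V (oddProdIdeal n J) := by
  refine ⟨?_, Submodule.isClosed_topologicalClosure _, ?_, ?_⟩
  · refine Submodule.topologicalClosure_minimal _ (Submodule.span_le.2 ?_) hV.1
    rintro x ⟨a, ha, rfl⟩
    exact altProd_mem_of n hV.2 a fun i => (hJ i).1 (ha i)
  · rintro a ha y hy z hz
    have := mem_of_clm (T := oddProdIdeal n J)
      (Submodule.isClosed_topologicalClosure _) (tpl y z) ?_ ha
    · simpa using this
    · rintro s ⟨b, hb, rfl⟩
      simp only [tpl_apply]
      rw [altProd_tp]
      refine Submodule.le_topologicalClosure _ (Submodule.subset_span ⟨_, fun i => ?_, rfl⟩)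
      by_cases h : i.1 = 2 * n
      · simp only [h, if_true]
        exact (hJ i).2.2.1 _ (hb i) _ hy _ hz
      · simp only [h, if_false]
        exact hb i
  · rintro x hx y hy a ha
    have := mem_of_clm (T := oddProdIdeal n J)
      (Submodule.isClosed_topologicalClosure _) (tpr x y) ?_ ha
    · simpa using this
    · rintro s ⟨b, hb, rfl⟩
      simp only [tpr_apply]
      rw [tp_altProd]
      refine Submodule.le_topologicalClosure _ (Submodule.subset_span ⟨_, fun i => ?_, rfl⟩)
      by_cases h : i.1 = 0
      · simp only [h, if_true]
        exact (hJ i).2.2.2 _ hx _ hy _ (hb i)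
      · simp only [h, if_false]
        exact hb i

theorem statement3 (V P : Submodule ℂ (H →L[ℂ] K)) (hV : IsTRO V)
    (hprime : IsTROPrime V P) : IsTROPrimal V P := by
  refine ⟨hprime.1, ?_⟩
  intro n J hJ hzero
  suffices h : ∀ (n : ℕ) (J : Fin (2 * n + 1) → Submodule ℂ (H →L[ℂ] K)),
      (∀ i, IsTROIdeal V (J i)) → oddProdIdeal n J ≤ P → ∃ i, J i ≤ P by
    exact h n J hJ (by rw [hzero]; exact bot_le)
  clear hzero hJ J n
  intro n
  induction n with
  | zero =>
      intro J hJ hle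
      refine ⟨0, fun x hx => hle ?_⟩
      refine Submodule.le_topologicalClosure _ (Submodule.subset_span ⟨fun _ => x, fun i => ?_, rfl⟩)
      have : i = 0 := by omega
      rw [this]; exact hx
  | succ n ih =>
      intro J hJ hle
      set J' : Fin (2 * n + 1) → Submodule ℂ (H →L[ℂ] K) :=
        fun i => J ⟨i.1, by omega⟩ with hJ'def
      have hJ' : ∀ i, IsTROIdeal V (J' i) := fun i => hJ _
      have hQideal : IsTROIdeal V (oddProdIdeal n J') :=
        oddProdIdeal_isIdeal V hV n J' hJ'
      have hstep : tripleProdIdeal (oddProdIdeal n J')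
          (J ⟨2 * n + 1, by omega⟩) (J ⟨2 * n + 2, by omega⟩) ≤ oddProdIdeal (n + 1) J := by
        refine Submodule.topologicalClosure_minimal _ (Submodule.span_le.2 ?_)
          (Submodule.isClosed_topologicalClosure _)
        rintro x ⟨a, ha, b, hb, c, hc, rfl⟩
        have := mem_of_clm (T := oddProdIdeal (n + 1) J)
          (Submodule.isClosed_topologicalClosure _) (tpl b c) ?_ ha
        · simpa using this
        · rintro s ⟨d, hd, rfl⟩
          simp only [tpl_apply]
          refine Submodule.le_topologicalClosure _ (Submodule.subset_span ?_)
          refine ⟨fun i => if h : i.1 < 2 * n + 1 then d ⟨i.1, h⟩ else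
            if i.1 = 2 * n + 1 then b else c, fun i => ?_, ?_⟩
          · by_cases h : i.1 < 2 * n + 1
            · simp only [dif_pos h]
              have hmem := hd ⟨i.1, h⟩
              rw [hJ'def] at hmem
              exact hmem
            · by_cases h2 : i.1 = 2 * n + 1
              · simp only [dif_neg h, if_pos h2]
                convert hb using 2
                exact Fin.ext h2
              · have h3 : i.1 = 2 * n + 2 := by have := i.isLt; omega
                simp only [dif_neg h, if_neg h2]
                convert hc using 2
                exact Fin.ext h3
          · simp only [altProd]
            congr 1
            · congr 1
              funext i
              simp [i.isLt]
            · simp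
            · simp
      have htri := hprime.2 _ _ _ hQideal (hJ _) (hJ _) (le_trans hstep hle)
      rcases htri with hQ | hB | hC
      · have hQle : oddProdIdeal n J' ≤ P := hQ
        obtain ⟨i, hi⟩ := ih J' hJ' hQle
        exact ⟨⟨i.1, by omega⟩, hi⟩
      · exact ⟨_, hB⟩
      · exact ⟨_, hC⟩
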